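/- arXiv:2101.06728 — 2 statements merged into one kernel-verified Lean document; each statement's English description precedes it below -/
import Mathlib

section
/- Let A, Ā ∈ ℝ^{N×N} with Ā = A + c·e_h·(e_h − e_r)ᵀ, c ≠ 0, r ≠ h. Then the pair (diag(A, Ā), [I_N −I_N]) has an unobservable state outside the span of the all-ones vector 1_{2N} corresponding to some eigenvalue λ if and only if the pair (A, (e_h − e_r)ᵀ) has an unobservable state outside the span of 1_N corresponding to λ. Equivalently: there exists v with [λI−A; λI−Ā] annihilating [v; v̄] and v = v̄ ≠ 0 if and only if A v = λ v and (e_h − e_r)ᵀ v = 0. -/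
open Matrix

lemma rank1_mulVec {N : ℕ} (r h : Fin N) (c : ℝ) (w : Fin N → ℂ) (i : Fin N) :
    (((c • Matrix.vecMulVec (Pi.single h 1) (Pi.single h 1 - Pi.single r 1)) :
      Matrix (Fin N) (Fin N) ℝ).map Complex.ofReal).mulVec w i
      = if i = h then (c : ℂ) * (w h - w r) else 0 := by
  simp only [Matrix.mulVec, dotProduct, Matrix.map_apply, Matrix.smul_apply,
    Matrix.vecMulVec_apply, Pi.sub_apply, Pi.single_apply, smul_eq_mul,
    Complex.ofReal_mul, Complex.ofReal_sub, apply_ite Complex.ofReal,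
    Complex.ofReal_one, Complex.ofReal_zero]
  by_cases hi : i = h
  · simp only [hi, if_pos rfl, mul_one, sub_mul, mul_sub, ite_mul, one_mul, zero_mul,
      Finset.sum_sub_distrib, Finset.sum_ite_eq', Finset.mem_univ, if_true, Finset.mul_sum,
      mul_ite, mul_zero]
  · simp [hi]

/-- For Ā = A + c·e_h·(e_h−e_r)ᵀ, c ≠ 0, r ≠ h: a nonzero state [v; v̄]
is unobservable for (diag(A,Ā), [I −I]) at λ (i.e. A v = λ v, Ā v̄ = λ v̄, v = v̄, v ≠ 0)
iff v = v̄ ≠ 0, A v = λ v and v h = v r. -/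
theorem stmt2 {N : ℕ} (A : Matrix (Fin N) (Fin N) ℝ) (r h : Fin N) (hrh : r ≠ h)
    (c : ℝ) (hc : c ≠ 0) (lam : ℂ) (v vbar : Fin N → ℂ) :
    let Abar := A + c • Matrix.vecMulVec (Pi.single h 1) (Pi.single h 1 - Pi.single r 1)
    ((A.map Complex.ofReal).mulVec v = lam • v ∧
      (Abar.map Complex.ofReal).mulVec vbar = lam • vbar ∧ v = vbar ∧ v ≠ 0)
      ↔ (v = vbar ∧ v ≠ 0 ∧ (A.map Complex.ofReal).mulVec v = lam • v ∧ v h = v r) := by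
  intro Abar
  have hmap : (Abar.map Complex.ofReal).mulVec vbar
      = (A.map Complex.ofReal).mulVec vbar
        + (((c • Matrix.vecMulVec (Pi.single h 1) (Pi.single h 1 - Pi.single r 1)) :
          Matrix (Fin N) (Fin N) ℝ).map Complex.ofReal).mulVec vbar := by
    show ((A + _).map Complex.ofReal).mulVec vbar = _
    rw [Matrix.map_add _ (fun a b => Complex.ofReal_add a b), Matrix.add_mulVec]
  constructor
  · rintro ⟨hAv, hAbar, hvv, hv0⟩
    refine ⟨hvv, hv0, hAv, ?_⟩
    rw [hmap, ← hvv, hAv] at hAbar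
    have h1 := congrFun hAbar h
    simp only [Pi.add_apply, rank1_mulVec r h c v h, if_pos rfl] at h1
    have h2 : (c : ℂ) * (v h - v r) = 0 := by
      have := add_eq_left.mp h1
      exact this
    rcases mul_eq_zero.mp h2 with h3 | h3
    · exact absurd (Complex.ofReal_eq_zero.mp h3) hc
    · exact sub_eq_zero.mp h3
  · rintro ⟨hvv, hv0, hAv, hvhr⟩
    refine ⟨hAv, ?_, hvv, hv0⟩
    rw [hmap, ← hvv, hAv]
    funext i
    simp [rank1_mulVec r h c v i, hvhr]
end

section
/- Let A, Ā ∈ ℝ^{N×N} with Ā = A − κℓ·e_h·(e_h − e_r)ᵀ (κℓ ≠ 0), and W with W·A = J̃·W as above. If the state evolves as x(t+1) = Ā·x(t) for t ≥ τ, then for every k ≥ 1 the residual satisfies r(τ+k) := W·x(τ+k) − J̃·W·x(τ+k−1) = −κℓ·((e_h − e_r)ᵀ Ā^{k−1} x(τ))·W e_h. In particular, each residual vector is a scalar multiple of W e_h. -/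
open Matrix

lemma vecMulVec_mulVec_aux {N : ℕ} (u v y : Fin N → ℝ) :
    (Matrix.vecMulVec u v).mulVec y = (v ⬝ᵥ y) • u := by
  funext i
  simp [Matrix.mulVec, Matrix.vecMulVec_apply, dotProduct, Finset.mul_sum, mul_assoc,
    mul_comm, mul_left_comm]

/-- With W A = J̃ W and Ā = A − c·e_h(e_h−e_r)ᵀ (c = κℓ ≠ 0), if
x(t+1) = Ā x(t) for t ≥ τ then the residual at time τ+k (k ≥ 1) equals
−c·((e_h−e_r)ᵀ Ā^{k−1} x(τ))·W e_h — a scalar multiple of W e_h. -/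
theorem stmt8 {N m : ℕ} (A : Matrix (Fin N) (Fin N) ℝ) (r h : Fin N) (hrh : r ≠ h)
    (c : ℝ) (hc : c ≠ 0)
    (Jt : Matrix (Fin m) (Fin m) ℝ) (W : Matrix (Fin m) (Fin N) ℝ)
    (hW : W * A = Jt * W)
    (τ : ℕ) (x : ℕ → Fin N → ℝ) :
    let b : Fin N → ℝ := Pi.single h 1 - Pi.single r 1
    let Abar := A - c • Matrix.vecMulVec (Pi.single h 1) b
    (∀ t, τ ≤ t → x (t + 1) = Abar.mulVec (x t)) →
      ∀ k : ℕ, W.mulVec (x (τ + k + 1)) - Jt.mulVec (W.mulVec (x (τ + k))) =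
        (-c * (b ⬝ᵥ (Abar ^ k).mulVec (x τ))) • W.mulVec (Pi.single h 1) := by
  intro b Abar hx k
  have hxk : ∀ j, x (τ + j) = (Abar ^ j).mulVec (x τ) := by
    intro j
    induction j with
    | zero => simp
    | succ n ih =>
      rw [show τ + (n + 1) = (τ + n) + 1 from rfl, hx _ (Nat.le_add_right _ _), ih,
        Matrix.mulVec_mulVec, ← pow_succ']
  have key : ∀ z : Fin N → ℝ, W.mulVec (Abar.mulVec z) - Jt.mulVec (W.mulVec z) =
      (-c * (b ⬝ᵥ z)) • W.mulVec (Pi.single h 1) := by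
    intro z
    have hM : W * Abar - Jt * W = (-c) • (W * Matrix.vecMulVec (Pi.single h 1) b) := by
      simp only [Abar, Matrix.mul_sub, hW, Matrix.mul_smul]
      module
    rw [Matrix.mulVec_mulVec, Matrix.mulVec_mulVec, ← Matrix.sub_mulVec, hM,
      Matrix.smul_mulVec, ← Matrix.mulVec_mulVec, vecMulVec_mulVec_aux,
      Matrix.mulVec_smul, smul_smul]
  rw [show τ + k + 1 = τ + (k + 1) from rfl, hxk (k + 1), hxk k,
    show Abar ^ (k + 1) = Abar * Abar ^ k from pow_succ' Abar k, ← Matrix.mulVec_mulVec]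
  exact key _
end
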